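/- Let H be a Hilbert space with an increasing sequence of finite-dimensional subspaces Lₙ with dense union, Pₙ the orthogonal projection onto Lₙ. Let π⁺, π⁻ be unitary representations of a group Γ on H such that π⁺(g) − π⁻(g) is compact for every g ∈ Γ. Define πₙ^±(g) = Pₙ π^±(g) Pₙ restricted to Lₙ. Then for every finite set F ⊂ Γ and every ε > 0 there exists N such that for all n ≥ N and all g, h, γ ∈ F: ‖(πₙ^±(gh) − πₙ^±(g)πₙ^±(h))(πₙ⁺(γ) − πₙ⁻(γ))‖ < ε. -/

import Mathlib

open Filter Topology

theorem stmt_6 {H : Type*} [NormedAddCommGroup H] [InnerProductSpace ℂ H] [CompleteSpace H]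
    {Γ : Type*} [Group Γ]
    (L : ℕ → Submodule ℂ H) [∀ n, FiniteDimensional ℂ (L n)]
    (hmono : Monotone L) (hdense : Dense (⋃ n, (L n : Set H)))
    (P : ℕ → H →L[ℂ] H)
    (hP : ∀ n, P n = (L n).subtypeL.comp ((L n).orthogonalProjectionOnto))
    (πp πm : Γ → H →L[ℂ] H)
    (hpmul : ∀ g h, πp (g * h) = πp g * πp h) (hmmul : ∀ g h, πm (g * h) = πm g * πm h)
    (hpu : ∀ g, πp g ∈ unitary (H →L[ℂ] H)) (hmu : ∀ g, πm g ∈ unitary (H →L[ℂ] H))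
    (hcompact : ∀ g, IsCompactOperator ((πp g - πm g : H →L[ℂ] H) : H → H))
    (πpn πmn : ℕ → Γ → H →L[ℂ] H)
    (hπpn : ∀ n g, πpn n g = P n * πp g * P n) (hπmn : ∀ n g, πmn n g = P n * πm g * P n) :
    ∀ (F : Finset Γ), ∀ ε > 0, ∃ N, ∀ n ≥ N, ∀ g ∈ F, ∀ h ∈ F, ∀ γ ∈ F,
      ‖(πpn n (g * h) - πpn n g * πpn n h) * (πpn n γ - πmn n γ)‖ < ε ∧
      ‖(πmn n (g * h) - πmn n g * πmn n h) * (πpn n γ - πmn n γ)‖ < ε := by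
  intro F ε hε
  -- basic facts about the projections
  have hQ_apply : ∀ n (x : H), P n x = ((L n).orthogonalProjectionOnto x : H) := by
    intro n x; rw [hP n]; rfl
  have hQmem : ∀ n (x : H), P n x ∈ L n := fun n x => by
    rw [hQ_apply]; exact ((L n).orthogonalProjectionOnto x).2
  have hQQ : ∀ n, P n * P n = P n := by
    intro n
    ext x
    have : P n (P n x) = P n x := by
      rw [hQ_apply n (P n x)]; exact Submodule.starProjection_eq_self_iff.mpr (hQmem n x)
    simpa [ContinuousLinearMap.mul_apply] using this
  have h1Qx : ∀ n (x : H), ‖x - P n x‖ ≤ ‖x‖ := by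
    intro n x
    have h1 : ((L n)ᗮ.orthogonalProjectionOnto x : H) = x - (L n).orthogonalProjectionOnto x :=
      Submodule.starProjection_orthogonal_val x
    have h2 : ‖((L n)ᗮ.orthogonalProjectionOnto x : H)‖ ≤ ‖x‖ := by
      calc ‖((L n)ᗮ.orthogonalProjectionOnto x : H)‖
          ≤ ‖(L n)ᗮ.orthogonalProjectionOnto‖ * ‖x‖ :=
            ((L n)ᗮ.orthogonalProjectionOnto).le_opNorm x
        _ ≤ 1 * ‖x‖ := by gcongr; exact Submodule.orthogonalProjectionOnto_norm_le _
        _ = ‖x‖ := one_mul _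
    rw [hQ_apply]
    rw [h1] at h2
    exact h2
  have hQx : ∀ n (x : H), ‖P n x‖ ≤ ‖x‖ := by
    intro n x
    rw [hQ_apply]
    calc ‖((L n).orthogonalProjectionOnto x : H)‖
        ≤ ‖(L n).orthogonalProjectionOnto‖ * ‖x‖ := ((L n).orthogonalProjectionOnto).le_opNorm x
      _ ≤ 1 * ‖x‖ := by gcongr; exact Submodule.orthogonalProjectionOnto_norm_le _
      _ = ‖x‖ := one_mul _
  have hQnorm : ∀ n, ‖P n‖ ≤ 1 := fun n =>
    (P n).opNorm_le_bound zero_le_one (fun x => by simpa using hQx n x)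
  have h1Qnorm : ∀ n, ‖(1 : H →L[ℂ] H) - P n‖ ≤ 1 := fun n =>
    ((1 : H →L[ℂ] H) - P n).opNorm_le_bound zero_le_one (fun x => by
      simpa [ContinuousLinearMap.sub_apply] using h1Qx n x)
  -- minimality of the orthogonal projection
  have hmin : ∀ n (x : H), ∀ y ∈ L n, ‖x - P n x‖ ≤ ‖x - y‖ := by
    intro n x y hy
    rw [hQ_apply, ← Submodule.starProjection_apply, Submodule.starProjection_minimal]
    have hbdd : BddBelow (Set.range fun w : L n => ‖x - (w : H)‖) :=
      ⟨0, by rintro z ⟨w, rfl⟩; exact norm_nonneg _⟩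
    exact ciInf_le hbdd (⟨y, hy⟩ : L n)
  -- pointwise convergence of the projections to the identity
  have hpt : ∀ (x : H), ∀ δ > 0, ∀ᶠ n in atTop, ‖x - P n x‖ < δ := by
    intro x δ hδ
    have hx : x ∈ closure (⋃ n, (L n : Set H)) := hdense x
    rcases Metric.mem_closure_iff.mp hx δ hδ with ⟨y, hy, hxy⟩
    rcases Set.mem_iUnion.mp hy with ⟨N, hyN⟩
    filter_upwards [eventually_ge_atTop N] with n hn
    calc ‖x - P n x‖ ≤ ‖x - y‖ := hmin n x y (hmono hn hyN)
      _ < δ := by rwa [← dist_eq_norm]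
  -- norm convergence against compact operators
  have hcomp : ∀ (C : H →L[ℂ] H), IsCompactOperator (C : H → H) → ∀ δ > 0,
      ∀ᶠ n in atTop, ‖((1 : H →L[ℂ] H) - P n) * C‖ < δ := by
    intro C hC δ hδ
    have hK1 : IsCompact (closure ((C : H → H) '' Metric.closedBall 0 1)) :=
      IsCompactOperator.isCompact_closure_image_closedBall (𝕜₁ := ℂ)
        (f := (C : H →ₗ[ℂ] H)) hC 1
    obtain ⟨t, htf, htsub⟩ := Metric.totallyBounded_iff.mp hK1.totallyBounded (δ/4) (by positivity)
    have hball : ∀ᶠ n in atTop, ∀ y ∈ t, ‖y - P n y‖ < δ/4 := by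
      rw [htf.eventually_all]
      exact fun y _ => hpt y (δ/4) (by positivity)
    filter_upwards [hball] with n hn
    have hbound : ∀ x : H, ‖(((1 : H →L[ℂ] H) - P n) * C) x‖ ≤ (δ/2) * ‖x‖ := by
      intro x
      rcases eq_or_ne x 0 with rfl | hx
      · simp
      · have hxn : (0:ℝ) < ‖x‖ := norm_pos_iff.mpr hx
        set u : H := (‖x‖⁻¹ : ℝ) • x with hu_def
        have hu : ‖u‖ = 1 := by
          rw [hu_def, norm_smul, Real.norm_eq_abs, abs_inv, abs_of_pos hxn]
          field_simp
        have hmem : C u ∈ closure ((C : H → H) '' Metric.closedBall 0 1) :=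
          subset_closure ⟨u, by simp [Metric.mem_closedBall, hu], rfl⟩
        obtain ⟨y, hyt, hy⟩ := Set.mem_iUnion₂.mp (htsub hmem)
        have hy' : ‖C u - y‖ < δ/4 := by
          have := Metric.mem_ball.mp hy
          rwa [dist_eq_norm] at this
        have key : ‖C u - P n (C u)‖ < δ/2 := by
          have e1 : C u - P n (C u) = (C u - y - P n (C u - y)) + (y - P n y) := by
            simp only [map_sub]; abel
          calc ‖C u - P n (C u)‖ ≤ ‖C u - y - P n (C u - y)‖ + ‖y - P n y‖ := by
                rw [e1]; exact norm_add_le _ _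
            _ ≤ ‖C u - y‖ + ‖y - P n y‖ := by gcongr; exact h1Qx n _
            _ < δ/4 + δ/4 := by gcongr; exact hn y hyt
            _ = δ/2 := by ring
        have hxu : x = (‖x‖ : ℝ) • u := by
          rw [hu_def, smul_smul]
          rw [mul_inv_cancel₀ hxn.ne', one_smul]
        have e2 : (((1 : H →L[ℂ] H) - P n) * C) x = (‖x‖ : ℝ) • (C u - P n (C u)) := by
          conv_lhs => rw [hxu]
          simp [ContinuousLinearMap.mul_apply, ContinuousLinearMap.sub_apply,
            map_smul, smul_sub]
        rw [e2, norm_smul, Real.norm_eq_abs, abs_of_pos hxn]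
        rw [mul_comm]
        exact mul_le_mul_of_nonneg_right key.le hxn.le
    calc ‖((1 : H →L[ℂ] H) - P n) * C‖ ≤ δ/2 :=
          ContinuousLinearMap.opNorm_le_bound _ (by positivity) hbound
      _ < δ := by linarith
  -- unitaries have norm at most 1
  have hun : ∀ (u : H →L[ℂ] H), u ∈ unitary (H →L[ℂ] H) → ‖u‖ ≤ 1 := by
    intro u hu
    have h1 : star u * u = 1 := hu.1
    have h2 : ‖u‖ * ‖u‖ = ‖star u * u‖ := (CStarRing.norm_star_mul_self).symm
    rw [h1] at h2
    have h3 : ‖(1 : H →L[ℂ] H)‖ ≤ 1 := ContinuousLinearMap.norm_id_le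
    nlinarith [norm_nonneg u]
  set K : Γ → H →L[ℂ] H := fun γ => πp γ - πm γ with hK
  -- compactness of the relevant operators
  have hcompKmul : ∀ (v : H →L[ℂ] H) (γ : Γ), IsCompactOperator ((v * K γ : H →L[ℂ] H) : H → H) := by
    intro v γ
    have : IsCompactOperator ((v : H → H) ∘ (K γ : H → H)) :=
      (hcompact γ).clm_comp v
    exact this
  -- the eventual smallness statement
  have hev : ∀ᶠ n in atTop, ∀ h ∈ F, ∀ γ ∈ F,
      ‖((1 : H →L[ℂ] H) - P n) * (πp h * K γ)‖ < ε/4 ∧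
      ‖((1 : H →L[ℂ] H) - P n) * (πm h * K γ)‖ < ε/4 ∧
      ‖((1 : H →L[ℂ] H) - P n) * K γ‖ < ε/4 := by
    rw [eventually_all_finset]
    intro h hh
    rw [eventually_all_finset]
    intro γ hγ
    have c1 := hcomp (πp h * K γ) (hcompKmul (πp h) γ) (ε/4) (by positivity)
    have c2 := hcomp (πm h * K γ) (hcompKmul (πm h) γ) (ε/4) (by positivity)
    have c3 := hcomp (K γ) (hcompact γ) (ε/4) (by positivity)
    filter_upwards [c1, c2, c3] with n h1 h2 h3
    exact ⟨h1, h2, h3⟩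
  obtain ⟨N, hN⟩ := eventually_atTop.mp hev
  refine ⟨N, fun n hn g hg h hh γ hγ => ?_⟩
  have hQQn : P n * P n = P n := hQQ n
  -- key algebraic identity
  have expand : ∀ u v w w' : H →L[ℂ] H,
      (P n*(u*v)*P n - (P n*u*P n)*(P n*v*P n)) * (P n*w*P n - P n*w'*P n)
      = (P n*u) * ((1-P n)*(v*(w-w')) - ((1-P n)*v)*((1-P n)*(w-w'))) * P n := by
    intro u v w w'
    calc (P n*(u*v)*P n - (P n*u*P n)*(P n*v*P n)) * (P n*w*P n - P n*w'*P n)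
        = P n*(u*v)*(P n*P n)*(w-w')*P n - P n*u*(P n*P n)*v*(P n*P n)*(w-w')*P n := by noncomm_ring
      _ = P n*(u*v)*P n*(w-w')*P n - P n*u*P n*v*P n*(w-w')*P n := by rw [hQQn]
      _ = (P n*u) * ((1-P n)*(v*(w-w')) - ((1-P n)*v)*((1-P n)*(w-w'))) * P n := by noncomm_ring
  -- norm estimate
  have est : ∀ u v k : H →L[ℂ] H, ‖u‖ ≤ 1 → ‖v‖ ≤ 1 →
      ‖(1-P n)*(v*k)‖ < ε/4 → ‖(1-P n)*k‖ < ε/4 →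
      ‖(P n*u) * ((1-P n)*(v*k) - ((1-P n)*v)*((1-P n)*k)) * P n‖ < ε := by
    intro u v k hu hv h1 h2
    have hQ1 : ‖P n‖ ≤ 1 := hQnorm n
    have h1Q1 : ‖(1:H →L[ℂ] H)-P n‖ ≤ 1 := h1Qnorm n
    have hQu : ‖P n*u‖ ≤ 1 :=
      le_trans (norm_mul_le _ _) (by nlinarith [norm_nonneg (P n), norm_nonneg u])
    have h1Qv : ‖((1:H →L[ℂ] H)-P n)*v‖ ≤ 1 :=
      le_trans (norm_mul_le _ _)
        (by nlinarith [norm_nonneg ((1:H →L[ℂ] H)-P n), norm_nonneg v])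
    have hT : ‖(1-P n)*(v*k) - ((1-P n)*v)*((1-P n)*k)‖ < ε/2 := by
      calc ‖(1-P n)*(v*k) - ((1-P n)*v)*((1-P n)*k)‖
          ≤ ‖(1-P n)*(v*k)‖ + ‖((1-P n)*v)*((1-P n)*k)‖ := norm_sub_le _ _
        _ ≤ ‖(1-P n)*(v*k)‖ + ‖(1-P n)*v‖*‖(1-P n)*k‖ := by gcongr; exact norm_mul_le _ _
        _ < ε/4 + 1*(ε/4) := by
            have h2' : ‖((1:H →L[ℂ] H)-P n)*v‖*‖(1-P n)*k‖ ≤ 1*‖(1-P n)*k‖ :=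
              mul_le_mul_of_nonneg_right h1Qv (norm_nonneg _)
            have h2'' : (1:ℝ)*‖(1-P n)*k‖ < 1*(ε/4) := by
              rw [one_mul, one_mul]; exact h2
            have := lt_of_le_of_lt h2' h2''
            linarith [h1]
        _ = ε/2 := by ring
    calc ‖(P n*u) * ((1-P n)*(v*k) - ((1-P n)*v)*((1-P n)*k)) * P n‖
        ≤ ‖(P n*u) * ((1-P n)*(v*k) - ((1-P n)*v)*((1-P n)*k))‖ * ‖P n‖ := norm_mul_le _ _
      _ ≤ ‖P n*u‖ * ‖(1-P n)*(v*k) - ((1-P n)*v)*((1-P n)*k)‖ * ‖P n‖ := by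
          gcongr; exact norm_mul_le _ _
      _ ≤ 1 * ‖(1-P n)*(v*k) - ((1-P n)*v)*((1-P n)*k)‖ * 1 := by gcongr
      _ = ‖(1-P n)*(v*k) - ((1-P n)*v)*((1-P n)*k)‖ := by ring
      _ < ε/2 := hT
      _ < ε := by linarith
  obtain ⟨e1, e2, e3⟩ := hN n hn h hh γ hγ
  constructor
  · simp only [hπpn, hπmn, hpmul]
    rw [expand (πp g) (πp h) (πp γ) (πm γ)]
    exact est (πp g) (πp h) (πp γ - πm γ) (hun _ (hpu g)) (hun _ (hpu h)) e1 e3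
  · simp only [hπpn, hπmn, hmmul]
    rw [expand (πm g) (πm h) (πp γ) (πm γ)]
    exact est (πm g) (πm h) (πp γ - πm γ) (hun _ (hmu g)) (hun _ (hmu h)) e2 e3
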